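/- For n qubits with observables u_j, v_j whose eigenbases are related by |u_j=1⟩ = α_j|v_j=1⟩ + β_j|v_j=2⟩, |u_j=2⟩ = β_j*|v_j=1⟩ − α_j*|v_j=2⟩ with 0 < |α_j|,|β_j| < 1, the subspace S of (ℂ²)^⊗n spanned by |φ_0⟩ = |v_1=2⟩⋯|v_n=2⟩ together with all product states having |v_r=1⟩ in slot r and |u_{r+1}=1⟩ in slot r+1 (cyclically) and arbitrary basis vectors elsewhere has dimension 2^n − 1, and the product state |φ_+⟩ = |u_1=1⟩⋯|u_n=1⟩ does not lie in S. -/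

import Mathlib

local notation "⟪" x ", " y "⟫" => @inner ℂ _ _ x y

/-- The product state `⊗ᵢ f i` of `n` qubits, as an element of `(ℂ²)^⊗n`
modeled by `EuclideanSpace ℂ (Fin n → Fin 2)`. -/
noncomputable def prodN {n : ℕ} (f : Fin n → EuclideanSpace ℂ (Fin 2)) :
    EuclideanSpace ℂ (Fin n → Fin 2) :=
  (WithLp.equiv 2 _).symm (fun x => ∏ i, f i (x i))

lemma prodN_apply {n : ℕ} (f : Fin n → EuclideanSpace ℂ (Fin 2)) (x : Fin n → Fin 2) :
    prodN f x = ∏ i, f i (x i) := rfl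

lemma inner_prodN {n : ℕ} (f g : Fin n → EuclideanSpace ℂ (Fin 2)) :
    ⟪prodN f, prodN g⟫ = ∏ i, ⟪f i, g i⟫ := by
  simp only [PiLp.inner_apply, RCLike.inner_apply, prodN_apply]
  rw [Finset.prod_univ_sum]
  · simp [Fintype.piFinset_univ, map_prod, Finset.prod_mul_distrib]
  -- maybe direction issues

lemma prodN_update {n : ℕ} (f : Fin n → EuclideanSpace ℂ (Fin 2)) (j : Fin n)
    (a b : ℂ) (p q : EuclideanSpace ℂ (Fin 2)) (h : f j = a • p + b • q) :
    prodN f = a • prodN (Function.update f j p) + b • prodN (Function.update f j q) := by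
  ext x
  simp only [PiLp.add_apply, PiLp.smul_apply, smul_eq_mul, prodN_apply]
  rw [← Finset.mul_prod_erase Finset.univ _ (Finset.mem_univ j),
      ← Finset.mul_prod_erase Finset.univ (fun i => Function.update f j p i (x i)) (Finset.mem_univ j),
      ← Finset.mul_prod_erase Finset.univ (fun i => Function.update f j q i (x i)) (Finset.mem_univ j)]
  have hp : ∀ i ∈ Finset.univ.erase j, Function.update f j p i (x i) = f i (x i) := by
    intro i hi
    rw [Function.update_of_ne (Finset.ne_of_mem_erase hi)]
  have hq : ∀ i ∈ Finset.univ.erase j, Function.update f j q i (x i) = f i (x i) := by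
    intro i hi
    rw [Function.update_of_ne (Finset.ne_of_mem_erase hi)]
  rw [Finset.prod_congr rfl hp, Finset.prod_congr rfl hq, Function.update_self,
      Function.update_self, h]
  simp only [PiLp.add_apply, PiLp.smul_apply, smul_eq_mul]
  ring

def qnext {n : ℕ} (r : Fin n) : Fin n :=
  ⟨(r.1 + 1) % n, Nat.mod_lt _ (Nat.zero_lt_of_lt r.2)⟩

lemma exists_step {n : ℕ} (x : Fin n → Fin 2) (i j : Fin n)
    (hi : x i = 1) (hj : x j = 0) : ∃ r, x r = 0 ∧ x (qnext r) = 1 := by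
  by_contra hcon
  push_neg at hcon
  have h2 : ∀ a : Fin 2, a ≠ 1 → a = 0 := by decide
  have hstep : ∀ r, x r = 0 → x (qnext r) = 0 := fun r hr => h2 _ (hcon r hr)
  have hpos : 0 < n := i.pos
  have key : ∀ k, x ⟨(j.1 + k) % n, Nat.mod_lt _ hpos⟩ = 0 := by
    intro k
    induction k with
    | zero => simpa [Nat.mod_eq_of_lt j.2] using hj
    | succ k ih =>
      have := hstep _ ih
      convert this using 2
      simp [qnext, Nat.add_mod_right, Nat.mod_add_mod, Nat.add_assoc]
  have := key (n - j.1 + i.1)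
  rw [show j.1 + (n - j.1 + i.1) = n + i.1 by omega] at this
  have heq : (⟨(n + i.1) % n, Nat.mod_lt _ hpos⟩ : Fin n) = i := by
    apply Fin.ext
    simp [Nat.add_mod_left, Nat.mod_eq_of_lt i.2]
  rw [heq, hi] at this
  exact absurd this (by decide)

lemma keyF {n : ℕ} (A B : Fin n → ℂ) (hB : ∀ j, B j ≠ 0)
    (F : (Fin n → Fin 2) → ℂ)
    (hrec : ∀ (r : Fin n) (x : Fin n → Fin 2), x r = 0 →
      A (qnext r) * F (Function.update x (qnext r) 0)
        + B (qnext r) * F (Function.update x (qnext r) 1) = 0) :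
    ∀ x : Fin n → Fin 2, x ≠ (fun _ => 1) →
      F x * ∏ i, B i = F (fun _ => 0) * ∏ i, (if x i = 0 then B i else -A i) := by
  have h2 : ∀ a : Fin 2, a ≠ 1 → a = 0 := by decide
  suffices H : ∀ k : ℕ, ∀ x : Fin n → Fin 2,
      (Finset.univ.filter (fun i => x i = 1)).card = k → x ≠ (fun _ => 1) →
      F x * ∏ i, B i = F (fun _ => 0) * ∏ i, (if x i = 0 then B i else -A i) by
    intro x hx; exact H _ x rfl hx
  intro k
  induction k using Nat.strong_induction_on with
  | _ k IH =>
    intro x hcard hx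
    rcases Nat.eq_zero_or_pos k with hk0 | hkpos
    · -- x is all zeros
      subst hk0
      have hzero : ∀ i, x i = 0 := by
        intro i
        apply h2
        intro h1
        have : i ∈ Finset.univ.filter (fun i => x i = 1) := by simp [h1]
        rw [Finset.card_eq_zero] at hcard
        simp [hcard] at this
      have : x = (fun _ => 0) := funext hzero
      subst this
      simp
    · -- there is a 1 somewhere
      have hne : (Finset.univ.filter (fun i => x i = 1)).Nonempty := by
        rw [← Finset.card_pos, hcard]; exact hkpos
      obtain ⟨i, hi⟩ := hne
      rw [Finset.mem_filter] at hi
      have hj : ∃ j, x j = 0 := by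
        by_contra hc
        push_neg at hc
        exact hx (funext fun j => by
          have := hc j
          rcases (by decide : ∀ a : Fin 2, a = 0 ∨ a = 1) (x j) with h | h
          · exact absurd h this
          · exact h)
      obtain ⟨j, hj⟩ := hj
      obtain ⟨r, hr0, hr1⟩ := exists_step x i j hi.2 hj
      set m := qnext r with hm
      have hmr : m ≠ r := fun h => by rw [h, hr0] at hr1; exact absurd hr1 (by decide)
      set x' := Function.update x m 0 with hx'
      have hx'r : x' r = 0 := by rw [hx', Function.update_of_ne (Ne.symm hmr)]; exact hr0
      have hxx : Function.update x' m 1 = x := by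
        funext l
        by_cases hl : l = m
        · subst hl; simp [hx', hr1]
        · simp [hx', Function.update_of_ne hl]
      have hx'0 : Function.update x' m 0 = x' := by
        rw [hx']; simp [Function.update_idem]
      have hrec' := hrec r x' hx'r
      rw [← hm, hx'0, hxx] at hrec'
      have hBF : B m * F x = -(A m * F x') := by linear_combination hrec'
      have hx'ne : x' ≠ (fun _ => 1) := by
        intro h
        have : x' r = 1 := by rw [h]
        rw [hx'r] at this; exact absurd this (by decide)
      have hfilter : Finset.univ.filter (fun l => x' l = 1)
          = (Finset.univ.filter (fun l => x l = 1)).erase m := by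
        ext l
        simp only [Finset.mem_filter, Finset.mem_erase, Finset.mem_univ, true_and]
        constructor
        · intro hl
          have hlm : l ≠ m := by
            intro h; subst h
            rw [hx', Function.update_self] at hl; exact absurd hl (by decide)
          rw [hx', Function.update_of_ne hlm] at hl
          exact ⟨hlm, hl⟩
        · intro ⟨hlm, hl⟩
          rw [hx', Function.update_of_ne hlm]; exact hl
      have hcard' : (Finset.univ.filter (fun l => x' l = 1)).card = k - 1 := by
        rw [hfilter, Finset.card_erase_of_mem (by simp [hr1]), hcard]
      have hklt : k - 1 < k := Nat.sub_lt hkpos one_pos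
      have IH' := IH (k - 1) hklt x' hcard' hx'ne
      -- split the products at m
      have hsplit : ∀ y : Fin n → Fin 2,
          (∏ l, (if y l = 0 then B l else -A l))
            = (if y m = 0 then B m else -A m) * ∏ l ∈ Finset.univ.erase m, (if y l = 0 then B l else -A l) :=
        fun y => (Finset.mul_prod_erase Finset.univ _ (Finset.mem_univ m)).symm
      have hprod_off : ∏ l ∈ Finset.univ.erase m, (if x' l = 0 then B l else -A l)
          = ∏ l ∈ Finset.univ.erase m, (if x l = 0 then B l else -A l) := by
        apply Finset.prod_congr rfl
        intro l hl
        rw [hx', Function.update_of_ne (Finset.ne_of_mem_erase hl)]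
      apply mul_right_cancel₀ (hB m)
      calc F x * (∏ l, B l) * B m = (B m * F x) * ∏ l, B l := by ring
        _ = -(A m) * (F x' * ∏ l, B l) := by rw [hBF]; ring
        _ = -(A m) * (F (fun _ => 0) * ∏ l, (if x' l = 0 then B l else -A l)) := by rw [IH']
        _ = -(A m) * (F (fun _ => 0) * (B m * ∏ l ∈ Finset.univ.erase m, (if x l = 0 then B l else -A l))) := by
            rw [hsplit x', hprod_off, hx', Function.update_self]; simp
        _ = F (fun _ => 0) * (∏ l, (if x l = 0 then B l else -A l)) * B m := by
            rw [hsplit x, hr1]; simp; ring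

/-- For `n` qubits with observables `u_j, v_j` whose eigenbases
are related by `|u_j=1⟩ = α_j|v_j=1⟩ + β_j|v_j=2⟩`,
`|u_j=2⟩ = β_j*|v_j=1⟩ − α_j*|v_j=2⟩` (`0 < |α_j|, |β_j| < 1`), the subspace `S`
of `(ℂ²)^{⊗n}` spanned by `|φ_0⟩ = |v_1=2⟩⋯|v_n=2⟩` together with all product
states having `|v_r=1⟩` in slot `r` and `|u_{r+1}=1⟩` in slot `r+1` (cyclically)
and arbitrary basis vectors (from either eigenbasis) elsewhere, has dimension
`2^n − 1`, and `|φ_+⟩ = |u_1=1⟩⋯|u_n=1⟩ ∉ S`.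
(Indexing: `|v_j=1⟩ = v j 0`, `|v_j=2⟩ = v j 1`, similarly for `u`.) -/
theorem statement14 (n : ℕ) (hn : 2 ≤ n)
    (v u : Fin n → Fin 2 → EuclideanSpace ℂ (Fin 2))
    (hv : ∀ j, Orthonormal ℂ (v j))
    (α β : Fin n → ℂ)
    (hnorm : ∀ j, ‖α j‖ ^ 2 + ‖β j‖ ^ 2 = 1)
    (hα : ∀ j, 0 < ‖α j‖ ∧ ‖α j‖ < 1)
    (hβ : ∀ j, 0 < ‖β j‖ ∧ ‖β j‖ < 1)
    (hu0 : ∀ j, u j 0 = α j • v j 0 + β j • v j 1)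
    (hu1 : ∀ j, u j 1 = (starRingEnd ℂ) (β j) • v j 0 - (starRingEnd ℂ) (α j) • v j 1) :
    letI next : Fin n → Fin n := fun r =>
      ⟨(r.1 + 1) % n, Nat.mod_lt _ (Nat.zero_lt_of_lt r.2)⟩
    letI pick : (Fin n → Fin 2 × Bool) → Fin n → EuclideanSpace ℂ (Fin 2) :=
      fun g i => if (g i).2 then v i (g i).1 else u i (g i).1
    letI S : Submodule ℂ (EuclideanSpace ℂ (Fin n → Fin 2)) :=
      Submodule.span ℂ
        (insert (prodN (fun i => v i 1))
          {ψ | ∃ (r : Fin n) (g : Fin n → Fin 2 × Bool),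
            ψ = prodN (fun i =>
              if i = r then v i 0 else if i = next r then u i 0 else pick g i)})
    Module.finrank ℂ S = 2 ^ n - 1 ∧ prodN (fun i => u i 0) ∉ S := by
  classical
  set Sset : Set (EuclideanSpace ℂ (Fin n → Fin 2)) :=
    insert (prodN fun i => v i 1)
      {ψ | ∃ (r : Fin n) (g : Fin n → Fin 2 × Bool), ψ = prodN fun i =>
        if i = r then v i 0 else if i = qnext r then u i 0
        else if (g i).2 then v i (g i).1 else u i (g i).1} with hSset
  suffices h : Module.finrank ℂ (Submodule.span ℂ Sset) = 2 ^ n - 1 ∧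
      prodN (fun i => u i 0) ∉ Submodule.span ℂ Sset by exact h
  -- nonzero scalars
  have hα0 : ∀ j, α j ≠ 0 := fun j => by
    have := (hα j).1; intro h; rw [h] at this; simp at this
  have hβ0 : ∀ j, β j ≠ 0 := fun j => by
    have := (hβ j).1; intro h; rw [h] at this; simp at this
  -- basic inner products
  have hv' : ∀ j (k l : Fin 2), ⟪v j k, v j l⟫ = if k = l then (1:ℂ) else 0 :=
    fun j => orthonormal_iff_ite.mp (hv j)
  have hvu0 : ∀ j (k : Fin 2), ⟪v j k, u j 0⟫ = if k = 0 then α j else β j := by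
    intro j k
    rw [hu0, inner_add_right, inner_smul_right, inner_smul_right, hv', hv']
    fin_cases k <;> simp
  have hvu1 : ∀ j (k : Fin 2),
      ⟪v j k, u j 1⟫ = if k = 0 then (starRingEnd ℂ) (β j) else -(starRingEnd ℂ) (α j) := by
    intro j k
    rw [hu1, inner_sub_right, inner_smul_right, inner_smul_right, hv', hv']
    fin_cases k <;> simp
  have huu01 : ∀ j, ⟪u j 0, u j 1⟫ = 0 := by
    intro j
    rw [hu0, inner_add_left, inner_smul_left, inner_smul_left, hvu1, hvu1]
    simp; ring
  have huu10 : ∀ j, ⟪u j 1, u j 0⟫ = 0 := by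
    intro j
    rw [← inner_conj_symm, huu01, map_zero]
  -- the orthonormal basis B
  set B : (Fin n → Fin 2) → EuclideanSpace ℂ (Fin n → Fin 2) :=
    fun x => prodN (fun i => v i (x i)) with hBdef
  have hBB : ∀ x y, ⟪B x, B y⟫ = if x = y then (1:ℂ) else 0 := by
    intro x y
    rw [hBdef, inner_prodN]
    by_cases h : x = y
    · subst h; simp [hv', show ∀ j k, ‖v j k‖ = 1 from fun j k => (hv j).1 k]
    · rw [if_neg h]
      obtain ⟨i, hi⟩ : ∃ i, x i ≠ y i := by
        by_contra hc; push_neg at hc; exact h (funext hc)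
      exact Finset.prod_eq_zero (Finset.mem_univ i) (by rw [hv', if_neg hi])
  have hBon : Orthonormal ℂ B := orthonormal_iff_ite.mpr hBB
  have hBspan : Submodule.span ℂ (Set.range B) = ⊤ := by
    apply hBon.linearIndependent.span_eq_top_of_card_eq_finrank
    simp [finrank_euclideanSpace]
  have horthB : ∀ d : EuclideanSpace ℂ (Fin n → Fin 2), (∀ x, ⟪B x, d⟫ = 0) → d = 0 := by
    intro d hd
    have hmem : ∀ w ∈ Submodule.span ℂ (Set.range B), ⟪w, d⟫ = (0:ℂ) := by
      intro w hw
      induction hw using Submodule.span_induction with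
      | mem w hw => obtain ⟨x, rfl⟩ := hw; exact hd x
      | zero => exact inner_zero_left d
      | add a b _ _ ha hb => rw [inner_add_left, ha, hb, add_zero]
      | smul a w _ hw => rw [inner_smul_left, hw, mul_zero]
    have := hmem d (hBspan ▸ Submodule.mem_top)
    exact inner_self_eq_zero.mp this
  -- special vectors
  set one1 : Fin n → Fin 2 := fun _ => 1 with hone
  set t : ℂ := ∏ i, -((starRingEnd ℂ) (α i)) with ht
  set u1p := prodN (fun i => u i 1) with hu1pdef
  set χ := u1p - t • (B one1) with hχdef
  have hnr : ∀ r : Fin n, qnext r ≠ r := by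
    intro r h
    have hval : (r.1 + 1) % n = r.1 := congrArg Fin.val h
    have h2 := r.2
    rcases lt_or_ge (r.1 + 1) n with hlt | hge
    · rw [Nat.mod_eq_of_lt hlt] at hval; omega
    · have hrn : r.1 + 1 = n := by omega
      rw [hrn, Nat.mod_self] at hval; omega
  have hchiB : ∀ x, ⟪B x, χ⟫ = if x = one1 then 0
      else ∏ i, (if x i = 0 then (starRingEnd ℂ) (β i) else -(starRingEnd ℂ) (α i)) := by
    intro x
    rw [hχdef, inner_sub_right, inner_smul_right, hu1pdef]
    have h2 : ⟪B x, prodN fun i => u i 1⟫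
        = ∏ i, (if x i = 0 then (starRingEnd ℂ) (β i) else -(starRingEnd ℂ) (α i)) := by
      rw [hBdef]
      rw [inner_prodN]
      exact Finset.prod_congr rfl (fun i _ => hvu1 i (x i))
    rw [h2, hBB x one1]
    by_cases hx : x = one1
    · rw [if_pos hx, if_pos hx, ht, mul_one, hx, sub_eq_zero]
      refine Finset.prod_congr rfl (fun i _ => ?_)
      rw [if_neg (show ¬ one1 i = 0 by simp [hone])]
    · rw [if_neg hx, if_neg hx, mul_zero, sub_zero]
  -- χ is orthogonal to all generators
  have hchi_perp : ∀ w ∈ Sset, ⟪w, χ⟫ = 0 := by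
    intro w hw
    rw [hSset] at hw
    rcases Set.mem_insert_iff.mp hw with rfl | ⟨r, g, rfl⟩
    · have := hchiB one1
      rw [if_pos rfl] at this
      exact this
    · rw [hχdef, inner_sub_right, inner_smul_right, hu1pdef]
      have hA : ⟪prodN (fun i => if i = r then v i 0 else if i = qnext r then u i 0
          else if (g i).2 then v i (g i).1 else u i (g i).1), prodN (fun i => u i 1)⟫ = 0 := by
        rw [inner_prodN]
        refine Finset.prod_eq_zero (Finset.mem_univ (qnext r)) ?_
        rw [if_neg (hnr r), if_pos rfl]
        exact huu01 _
      have hBp : ⟪prodN (fun i => if i = r then v i 0 else if i = qnext r then u i 0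
          else if (g i).2 then v i (g i).1 else u i (g i).1), B one1⟫ = 0 := by
        rw [hBdef, inner_prodN]
        refine Finset.prod_eq_zero (Finset.mem_univ r) ?_
        rw [if_pos rfl, hv']
        simp [hone]
      rw [hA, hBp]
      ring
  have hspan_perp : Submodule.span ℂ Sset ≤ (ℂ ∙ χ)ᗮ := by
    rw [Submodule.span_le]
    intro w hw
    rw [SetLike.mem_coe, Submodule.mem_orthogonal_singleton_iff_inner_left]
    exact hchi_perp w hw
  have hchi_mem : χ ∈ (Submodule.span ℂ Sset)ᗮ := by
    have h1 : (ℂ ∙ χ) ≤ (Submodule.span ℂ Sset)ᗮ :=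
      le_trans (Submodule.le_orthogonal_orthogonal _) (Submodule.orthogonal_le hspan_perp)
    exact h1 (Submodule.mem_span_singleton_self χ)
  -- inner product of χ with φ₊
  have hchi_plus : ⟪χ, prodN (fun i => u i 0)⟫ = -((∏ i, -(α i)) * ∏ i, β i) := by
    rw [hχdef, inner_sub_left, inner_smul_left, hu1pdef, hBdef, inner_prodN, inner_prodN]
    have h1 : (∏ i, ⟪u i 1, u i 0⟫) = 0 :=
      Finset.prod_eq_zero (Finset.mem_univ (⟨0, by omega⟩ : Fin n)) (huu10 _)
    have h2 : (∏ i, ⟪v i (one1 i), u i 0⟫) = ∏ i, β i := by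
      refine Finset.prod_congr rfl (fun i _ => ?_)
      rw [hvu0, if_neg (show ¬ one1 i = 0 by simp [hone])]
    rw [h1, h2, ht, map_prod]
    simp only [map_neg, Complex.conj_conj]
    ring
  have hchi_ne : ⟪χ, prodN (fun i => u i 0)⟫ ≠ 0 := by
    rw [hchi_plus]
    refine neg_ne_zero.mpr (mul_ne_zero ?_ ?_)
    · exact Finset.prod_ne_zero_iff.mpr (fun i _ => neg_ne_zero.mpr (hα0 i))
    · exact Finset.prod_ne_zero_iff.mpr (fun i _ => hβ0 i)
  have hχ0 : χ ≠ 0 := fun h => hchi_ne (by rw [h, inner_zero_left])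
  -- the hard inclusion
  have hperp_le : (Submodule.span ℂ Sset)ᗮ ≤ (ℂ ∙ χ) := by
    intro c hc
    rw [Submodule.mem_orthogonal] at hc
    have hA : ⟪B one1, c⟫ = 0 := by
      refine hc _ (Submodule.subset_span ?_)
      rw [hSset]
      exact Set.mem_insert _ _
    have hrec : ∀ (r : Fin n) (x : Fin n → Fin 2), x r = 0 →
        (starRingEnd ℂ) (α (qnext r)) * ⟪B (Function.update x (qnext r) 0), c⟫
          + (starRingEnd ℂ) (β (qnext r)) * ⟪B (Function.update x (qnext r) 1), c⟫ = 0 := by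
      intro r x hxr
      set m := qnext r with hmdef
      set f : Fin n → EuclideanSpace ℂ (Fin 2) :=
        fun i => if i = r then v i 0 else if i = m then u i 0 else v i (x i) with hf
      have hmem : prodN f ∈ Sset := by
        rw [hSset]
        apply Set.mem_insert_of_mem
        exact ⟨r, fun i => (x i, true), by simp [hf, hmdef]⟩
      have h0 : ⟪prodN f, c⟫ = 0 := hc _ (Submodule.subset_span hmem)
      have hfeq : f = Function.update (fun i => v i (x i)) m (u m 0) := by
        funext i
        by_cases him : i = m
        · subst him
          simp only [hf, Function.update_self]
          rw [hmdef]
          simp [hnr r]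
        · simp only [hf, Function.update_of_ne him]
          by_cases hir : i = r
          · subst hir
            rw [if_pos rfl, hxr]
          · rw [if_neg hir, if_neg him]
      have hupd : ∀ k : Fin 2, Function.update (fun i => v i (x i)) m (v m k)
          = fun i => v i (Function.update x m k i) := by
        intro k; funext i
        by_cases him : i = m
        · subst him; simp only [Function.update_self]
        · simp only [Function.update_of_ne him]
      have hexp : prodN f = α m • B (Function.update x m 0) + β m • B (Function.update x m 1) := by
        rw [hfeq, prodN_update (Function.update (fun i => v i (x i)) m (u m 0)) m (α m) (β m)
          (v m 0) (v m 1) (by rw [Function.update_self]; exact hu0 m)]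
        rw [Function.update_idem, Function.update_idem, hupd 0, hupd 1, hBdef]
      rw [hexp, inner_add_left, inner_smul_left, inner_smul_left] at h0
      exact h0
    have hkey := keyF (fun j => (starRingEnd ℂ) (α j)) (fun j => (starRingEnd ℂ) (β j))
      (fun j => by simpa using hβ0 j) (fun x => ⟪B x, c⟫) hrec
    have hprodβ : (∏ i, (starRingEnd ℂ) (β i)) ≠ 0 :=
      Finset.prod_ne_zero_iff.mpr (fun i _ => by simpa using hβ0 i)
    set lam : ℂ := ⟪B (fun _ => 0), c⟫ / ∏ i, (starRingEnd ℂ) (β i) with hlam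
    have hdzero : ∀ x, ⟪B x, c - lam • χ⟫ = 0 := by
      intro x
      rw [inner_sub_right, inner_smul_right, hchiB x]
      by_cases hx : x = one1
      · rw [if_pos hx, mul_zero, sub_zero, hx]
        exact hA
      · rw [if_neg hx]
        have hkx := hkey x (by rw [hone] at hx; exact hx)
        have hgoal : ⟪B x, c⟫
            = lam * ∏ i, (if x i = 0 then (starRingEnd ℂ) (β i) else -(starRingEnd ℂ) (α i)) := by
          rw [hlam, div_mul_eq_mul_div, eq_div_iff hprodβ]
          linear_combination hkx
        rw [hgoal]
        ring
    have hd : c - lam • χ = 0 := horthB _ hdzero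
    rw [Submodule.mem_span_singleton]
    exact ⟨lam, (sub_eq_zero.mp hd).symm⟩
  have hperp_eq : (Submodule.span ℂ Sset)ᗮ = (ℂ ∙ χ) :=
    le_antisymm hperp_le ((Submodule.span_singleton_le_iff_mem χ _).mpr hchi_mem)
  have hEdim : Module.finrank ℂ (EuclideanSpace ℂ (Fin n → Fin 2)) = 2 ^ n := by
    simp [finrank_euclideanSpace, Fintype.card_fun]
  have hfin : Module.finrank ℂ (Submodule.span ℂ Sset) + 1 = 2 ^ n := by
    have h1 := Submodule.finrank_add_finrank_orthogonal (K := Submodule.span ℂ Sset)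
    rw [hperp_eq, finrank_span_singleton hχ0, hEdim] at h1
    exact h1
  refine ⟨?_, ?_⟩
  · have h2 : 1 ≤ 2 ^ n := Nat.one_le_two_pow
    omega
  · intro hmem
    have h0 : ⟪prodN (fun i => u i 0), χ⟫ = 0 :=
      (Submodule.mem_orthogonal _ χ).mp hchi_mem _ hmem
    have hcc : ⟪χ, prodN (fun i => u i 0)⟫ = 0 := by
      rw [← inner_conj_symm, h0, map_zero]
    exact hchi_ne hcc
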